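/- For all real u with 0 ≤ u ≤ 1 and all ε ∈ [0,1]: 1 − εu ≤ cosh(u)^m · (1 − ε·tanh(u)) ≤ 1, provided m·u² ≤ εu/2 (i.e., mu ≤ ε/2). -/

import Mathlib

private lemma mono_aux {f f' : ℝ → ℝ} (hd : ∀ x, HasDerivAt f (f' x) x)
    (h0 : ∀ x, 0 < x → 0 ≤ f' x) {u : ℝ} (hu : 0 ≤ u) : f 0 ≤ f u := by
  have hm : MonotoneOn f (Set.Ici 0) :=
    monotoneOn_of_hasDerivWithinAt_nonneg (convex_Ici 0)
      (fun x _ => (hd x).continuousAt.continuousWithinAt)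
      (fun x hx => (hd x).hasDerivWithinAt)
      (fun x hx => h0 x (by simpa [interior_Ici] using hx))
  exact hm Set.self_mem_Ici hu hu

private lemma lemA {u : ℝ} (hu : 0 ≤ u) : Real.sinh u ≤ u * Real.cosh u := by
  have h := mono_aux (f := fun x => x * Real.cosh x - Real.sinh x)
      (f' := fun x => x * Real.sinh x) (fun x => by
        have := ((hasDerivAt_id x).mul (Real.hasDerivAt_cosh x)).sub (Real.hasDerivAt_sinh x)
        refine this.congr_deriv ?_; simp [id_eq])
      (fun x hx => mul_nonneg hx.le (le_of_lt (Real.sinh_pos_iff.2 hx))) hu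
  simp only [Real.sinh_zero, Real.cosh_zero, zero_mul, sub_zero, mul_one, sub_self] at h
  linarith

private lemma lemB {u : ℝ} (hu : 0 ≤ u) : Real.cosh u * (1 - u ^ 2 / 2) ≤ 1 := by
  have h := mono_aux (f := fun x => -(Real.cosh x * (1 - x ^ 2 / 2)))
      (f' := fun x => x * Real.cosh x - Real.sinh x + (x ^ 2 / 2) * Real.sinh x) (fun x => by
        have := ((Real.hasDerivAt_cosh x).mul
          ((hasDerivAt_const x (1:ℝ)).sub ((hasDerivAt_pow 2 x).div_const 2))).neg
        refine this.congr_deriv ?_; simp only [Pi.sub_apply]; push_cast; ring)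
      (fun x hx => by
        have h1 := lemA hx.le
        have h2 : 0 ≤ Real.sinh x := le_of_lt (Real.sinh_pos_iff.2 hx)
        nlinarith [sq_nonneg x]) hu
  simp only [Real.cosh_zero, one_mul] at h
  nlinarith

private lemma lemC {u : ℝ} (hu : 0 ≤ u) : (u - u ^ 3 / 3) * Real.cosh u ≤ Real.sinh u := by
  have h := mono_aux (f := fun x => Real.sinh x - (x - x ^ 3 / 3) * Real.cosh x)
      (f' := fun x => x ^ 2 * Real.cosh x - (x - x ^ 3 / 3) * Real.sinh x) (fun x => by
        have := (Real.hasDerivAt_sinh x).sub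
          (((hasDerivAt_id x).sub ((hasDerivAt_pow 3 x).div_const 3)).mul
            (Real.hasDerivAt_cosh x))
        refine this.congr_deriv ?_; simp [id_eq]; push_cast; ring)
      (fun x hx => by
        have h1 := lemA hx.le
        have h2 : 0 ≤ Real.sinh x := le_of_lt (Real.sinh_pos_iff.2 hx)
        have h3 : 0 ≤ Real.cosh x := (Real.cosh_pos x).le
        nlinarith [mul_le_mul_of_nonneg_left h1 hx.le, mul_nonneg (mul_nonneg hx.le (mul_nonneg hx.le hx.le)) h2]) hu
  simp only [Real.sinh_zero, Real.cosh_zero] at h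
  nlinarith

theorem stmt_10 (m : ℕ) (hm : 0 < m) (u ε : ℝ)
    (hu : u ∈ Set.Icc (0:ℝ) 1) (hε : ε ∈ Set.Icc (0:ℝ) 1)
    (hmu : (m : ℝ) * u ≤ ε / 2) :
    1 - ε * u ≤ Real.cosh u ^ m * (1 - ε * Real.tanh u) ∧
    Real.cosh u ^ m * (1 - ε * Real.tanh u) ≤ 1 := by
  obtain ⟨hu0, hu1⟩ := hu
  obtain ⟨hε0, hε1⟩ := hε
  have hcpos : 0 < Real.cosh u := Real.cosh_pos u
  have hc1 : 1 ≤ Real.cosh u := Real.one_le_cosh u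
  have htanh : Real.tanh u = Real.sinh u / Real.cosh u := Real.tanh_eq_sinh_div_cosh u
  have htle : Real.tanh u ≤ u := by
    rw [htanh, div_le_iff₀ hcpos]; exact lemA hu0
  have htge : u - u ^ 3 / 3 ≤ Real.tanh u := by
    rw [htanh, le_div_iff₀ hcpos]; exact lemC hu0
  have hc3 : u ^ 3 ≤ u := by
    nlinarith [mul_nonneg (mul_nonneg hu0 hu0) (sub_nonneg.2 hu1), mul_nonneg hu0 (sub_nonneg.2 hu1)]
  have htnn : 0 ≤ Real.tanh u := by linarith
  have h1 : 0 ≤ 1 - ε * Real.tanh u := by nlinarith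
  have hpow1 : (1:ℝ) ≤ Real.cosh u ^ m := one_le_pow₀ hc1
  constructor
  · calc 1 - ε * u ≤ 1 - ε * Real.tanh u := by nlinarith
      _ ≤ Real.cosh u ^ m * (1 - ε * Real.tanh u) := le_mul_of_one_le_left h1 hpow1
  · have hm1 : (1:ℝ) ≤ (m:ℝ) := by exact_mod_cast hm
    have hbern : 1 - (m:ℝ) * (u ^ 2 / 2) ≤ (1 - u ^ 2 / 2) ^ m := by
      have h := one_add_mul_le_pow (a := -(u ^ 2 / 2)) (by nlinarith) m
      calc 1 - (m:ℝ) * (u ^ 2 / 2) = 1 + (m:ℝ) * (-(u ^ 2 / 2)) := by ring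
        _ ≤ (1 + -(u ^ 2 / 2)) ^ m := h
        _ = (1 - u ^ 2 / 2) ^ m := by ring_nf
    have hkey : 1 - ε * Real.tanh u ≤ (1 - u ^ 2 / 2) ^ m := by
      have h2 : ε * (u - u ^ 3 / 3) ≤ ε * Real.tanh u :=
        mul_le_mul_of_nonneg_left htge hε0
      have h3 : (m:ℝ) * (u ^ 2 / 2) ≤ ε * Real.tanh u := by
        nlinarith [mul_le_mul_of_nonneg_right hmu hu0, mul_nonneg (mul_nonneg (Nat.cast_nonneg m : (0:ℝ) ≤ m) hu0) hu0]
      linarith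
    calc Real.cosh u ^ m * (1 - ε * Real.tanh u)
        ≤ Real.cosh u ^ m * (1 - u ^ 2 / 2) ^ m :=
          mul_le_mul_of_nonneg_left hkey (pow_nonneg hcpos.le m)
      _ = (Real.cosh u * (1 - u ^ 2 / 2)) ^ m := (mul_pow _ _ _).symm
      _ ≤ 1 := pow_le_one₀
          (mul_nonneg hcpos.le (by nlinarith [mul_nonneg (sub_nonneg.2 hu1) hu0])) (lemB hu0)
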